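/- Let S be a real m×n matrix with rank(S̄̄) = n, let Σ be a symmetric m×m matrix, and let W be a symmetric m×m matrix. For p ∈ ℝⁿ set M_p = S·diag(p)·Sᵀ + Σ, and define Φ₀(p) = trace(M_p⁻¹·W) + log|det(M_p)|. Then the set Ω = {p ∈ ℝⁿ : M_p is positive definite and 2W − M_p is positive definite} is convex, and Φ₀ is strictly convex on Ω; in particular Φ₀ has at most one minimizer in Ω. -/

import Mathlib

open Matrix

/-- The matrix of entrywise products of pairs of rows of `S`:
`(S̄̄)_{(i,j),k} = S i k * S j k`. -/
noncomputable def pairProdMatrix {m n : ℕ} (S : Matrix (Fin m) (Fin n) ℝ) :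
    Matrix (Fin m × Fin m) (Fin n) ℝ :=
  Matrix.of fun ij k => S ij.1 k * S ij.2 k

/-- The covariance matrix `M_p = S · diag p · Sᵀ + Σ`. -/
noncomputable def covMat {m n : ℕ} (S : Matrix (Fin m) (Fin n) ℝ)
    (Sig : Matrix (Fin m) (Fin m) ℝ) (p : Fin n → ℝ) : Matrix (Fin m) (Fin m) ℝ :=
  S * Matrix.diagonal p * Sᵀ + Sig

lemma diag_ne_zero_of_rank {m n : ℕ} {S : Matrix (Fin m) (Fin n) ℝ}
    (hrank : (pairProdMatrix S).rank = n) {v : Fin n → ℝ} (hv : v ≠ 0) :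
    S * Matrix.diagonal v * Sᵀ ≠ 0 := by
  intro h
  apply hv
  have hker : (pairProdMatrix S).mulVecLin v = 0 := by
    funext ij
    have hentry := congrFun (congrFun h ij.1) ij.2
    have he : (S * Matrix.diagonal v * Sᵀ) ij.1 ij.2
        = ∑ k, S ij.1 k * S ij.2 k * v k := by
      rw [Matrix.mul_apply]
      refine Finset.sum_congr rfl fun k _ => ?_
      rw [Matrix.mul_diagonal, Matrix.transpose_apply]
      ring
    rw [he] at hentry
    simp only [Matrix.mulVecLin_apply, Matrix.mulVec, dotProduct, pairProdMatrix,
      Matrix.of_apply, Pi.zero_apply]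
    exact hentry
  have hkerbot : LinearMap.ker (pairProdMatrix S).mulVecLin = ⊥ := by
    rw [← Submodule.finrank_eq_zero (R := ℝ)]
    have h1 := LinearMap.finrank_range_add_finrank_ker (pairProdMatrix S).mulVecLin
    have h2 : Module.finrank ℝ (Fin n → ℝ) = n := by simp
    rw [h2] at h1
    have h3 : Module.finrank ℝ (LinearMap.range (pairProdMatrix S).mulVecLin) = n := hrank
    omega
  have : v ∈ LinearMap.ker (pairProdMatrix S).mulVecLin := hker
  rwa [hkerbot, Submodule.mem_bot] at this

lemma covMat_affine {m n : ℕ} (S : Matrix (Fin m) (Fin n) ℝ)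
    (Sig : Matrix (Fin m) (Fin m) ℝ) (p q : Fin n → ℝ) (c : ℝ) :
    covMat S Sig (p + c • q) = covMat S Sig p + c • (S * Matrix.diagonal q * Sᵀ) := by
  unfold covMat
  have hd : Matrix.diagonal (p + c • q) = Matrix.diagonal p + c • Matrix.diagonal q := by
    ext i j
    rcases eq_or_ne i j with rfl | h
    · simp
    · simp [Matrix.diagonal_apply_ne _ h]
  rw [hd, Matrix.mul_add, Matrix.add_mul, Matrix.mul_smul, Matrix.smul_mul]
  abel


/-- scalar strict convexity of u ↦ w/u + log u on (0, 2w) -/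
lemma psi_strictConvexOn (w : ℝ) (hw : 0 < w) :
    StrictConvexOn ℝ (Set.Ioo (0:ℝ) (2*w)) (fun u => w * u⁻¹ + Real.log u) := by
  set f : ℝ → ℝ := fun u => w * u⁻¹ + Real.log u with hf
  set g1 : ℝ → ℝ := fun u => w * (-(u^2)⁻¹) + u⁻¹ with hg1
  have h1 : ∀ x : ℝ, x ≠ 0 → HasDerivAt f (g1 x) x := by
    intro x hx
    exact ((hasDerivAt_inv hx).const_mul w).add (Real.hasDerivAt_log hx)
  have h2 : ∀ x : ℝ, x ≠ 0 → HasDerivAt g1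
      (w * (-(-(2 * x) / (x^2)^2)) + -(x^2)⁻¹) x := by
    intro x hx
    have hx2 : x^2 ≠ 0 := pow_ne_zero 2 hx
    have hpow : HasDerivAt (fun u : ℝ => u^2) (2 * x) x := by
      simpa using hasDerivAt_pow 2 x
    exact (((hpow.inv hx2).neg.const_mul w)).add (hasDerivAt_inv hx)
  apply strictConvexOn_of_deriv2_pos (convex_Ioo _ _)
  · intro x hx
    exact ((h1 x (ne_of_gt hx.1)).continuousAt).continuousWithinAt
  · intro x hx
    rw [interior_Ioo] at hx
    have hx0 : x ≠ 0 := ne_of_gt hx.1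
    have hev : deriv f =ᶠ[nhds x] g1 := by
      filter_upwards [isOpen_compl_singleton.mem_nhds (by simpa using hx0 :
        x ∈ ({(0:ℝ)}ᶜ : Set ℝ))] with u hu
      exact (h1 u hu).deriv
    have : deriv^[2] f x = deriv g1 x := by
      simp only [Function.iterate_succ, Function.iterate_zero, Function.comp_apply, id]
      exact hev.deriv_eq
    rw [this, (h2 x hx0).deriv]
    have hkey : w * (-(-(2 * x) / (x^2)^2)) + -(x^2)⁻¹ = (2*w - x) / x^3 := by
      field_simp
      ring
    rw [hkey]
    have hx1 : 0 < x := hx.1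
    have : 0 < x^3 := by positivity
    exact div_pos (by linarith [hx.2]) this

lemma posDef_smul {m : ℕ} {M : Matrix (Fin m) (Fin m) ℝ} (hM : M.PosDef)
    {c : ℝ} (hc : 0 < c) : (c • M).PosDef := by
  refine Matrix.PosDef.of_dotProduct_mulVec_pos ?_ fun x hx => ?_
  · unfold Matrix.IsHermitian
    rw [Matrix.conjTranspose_smul, hM.1.eq]
    simp
  · rw [Matrix.smul_mulVec, dotProduct_smul, smul_eq_mul]
    exact mul_pos hc (hM.dotProduct_mulVec_pos hx)

lemma posDef_conj {m : ℕ} {A C : Matrix (Fin m) (Fin m) ℝ} (hA : A.PosDef)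
    (hC : IsUnit C.det) : (Cᴴ * A * C).PosDef := by
  refine Matrix.PosDef.of_dotProduct_mulVec_pos ?_ fun x hx => ?_
  · have hAt : Aᵀ = A := by simpa using hA.1.eq
    unfold Matrix.IsHermitian
    simp [Matrix.conjTranspose_mul, Matrix.mul_assoc, hAt]
  · have hCx : C *ᵥ x ≠ 0 := by
      intro h
      apply hx
      have : C⁻¹ *ᵥ (C *ᵥ x) = x := by
        rw [Matrix.mulVec_mulVec, Matrix.nonsing_inv_mul _ hC, Matrix.one_mulVec]
      rw [h, Matrix.mulVec_zero] at this
      exact this.symm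
    have heq : star x ⬝ᵥ (Cᴴ * A * C) *ᵥ x = star (C *ᵥ x) ⬝ᵥ A *ᵥ (C *ᵥ x) := by
      rw [star_mulVec, ← Matrix.mulVec_mulVec, ← Matrix.mulVec_mulVec,
        Matrix.dotProduct_mulVec]
    rw [heq]
    exact hA.dotProduct_mulVec_pos hCx

lemma posDef_diag_entry {m : ℕ} {A : Matrix (Fin m) (Fin m) ℝ} (hA : A.PosDef)
    (k : Fin m) : 0 < A k k := by
  have h := hA.dotProduct_mulVec_pos (x := Pi.single k 1) (by
    intro h
    have := congrFun h k
    simp at this)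
  simpa using h

lemma trace_diagonal_mul {m : ℕ} (e : Fin m → ℝ) (N : Matrix (Fin m) (Fin m) ℝ) :
    (Matrix.diagonal e * N).trace = ∑ k, e k * N k k := by
  simp [Matrix.trace, Matrix.diag, Matrix.diagonal_mul]

set_option maxHeartbeats 2000000 in
open scoped MatrixOrder in
lemma core {m : ℕ} (W M₀ D : Matrix (Fin m) (Fin m) ℝ)
    (h0 : M₀.PosDef) (h0' : ((2:ℝ) • W - M₀).PosDef)
    (h1 : (M₀ + D).PosDef) (h1' : ((2:ℝ) • W - (M₀ + D)).PosDef)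
    (hDh : Dᵀ = D) (hD0 : D ≠ 0)
    {a b : ℝ} (ha : 0 < a) (hb : 0 < b) (hab : a + b = 1) :
    ((M₀ + b • D)⁻¹ * W).trace + Real.log |(M₀ + b • D).det| <
      a * ((M₀⁻¹ * W).trace + Real.log |M₀.det|) +
      b * (((M₀ + D)⁻¹ * W).trace + Real.log |(M₀ + D).det|) := by
  -- W is positive definite
  have hW : W.PosDef := by
    have h2W : ((2:ℝ) • W).PosDef := by
      have := h0'.add h0
      simpa using this
    have := posDef_smul h2W (by norm_num : (0:ℝ) < 2⁻¹)
    simpa [smul_smul] using this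
  -- square root of M₀
  obtain ⟨Q, hQherm, hQmul⟩ : ∃ Q : Matrix (Fin m) (Fin m) ℝ, Q.IsHermitian ∧ Q * Q = M₀ :=
    ⟨CFC.sqrt M₀, (CFC.sqrt_nonneg M₀).isSelfAdjoint, CFC.sqrt_mul_sqrt_self M₀ h0.posSemidef.nonneg⟩
  have hQdet : IsUnit Q.det := by
    have hdd : Q.det * Q.det = M₀.det := by rw [← Matrix.det_mul, hQmul]
    have hMdet := h0.det_pos
    refine isUnit_iff_ne_zero.2 fun h => ?_
    rw [h, mul_zero] at hdd
    linarith
  set R : Matrix (Fin m) (Fin m) ℝ := Q⁻¹ with hRdef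
  have hRherm : R.IsHermitian := hQherm.inv
  have hRdet : IsUnit R.det := (Matrix.isUnit_nonsing_inv_det Q hQdet)
  have hRM₀R : R * M₀ * R = 1 := by
    rw [← hQmul]
    calc R * (Q * Q) * R = (R * Q) * (Q * R) := by simp only [Matrix.mul_assoc]
    _ = 1 := by
        rw [Matrix.nonsing_inv_mul _ hQdet, Matrix.mul_nonsing_inv _ hQdet, one_mul]
  set B : Matrix (Fin m) (Fin m) ℝ := R * D * R with hBdef
  have hBherm : B.IsHermitian := by
    have hDt : Dᴴ = D := by simpa using hDh
    unfold Matrix.IsHermitian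
    rw [Matrix.conjTranspose_mul, Matrix.conjTranspose_mul, hRherm.eq, hDt,
      ← Matrix.mul_assoc, hBdef]
  obtain ⟨U, lam, hUU, hUB, hBspec⟩ : ∃ (U : Matrix (Fin m) (Fin m) ℝ) (lam : Fin m → ℝ),
      Uᴴ * U = 1 ∧ Uᴴ * B * U = Matrix.diagonal lam ∧ B = U * Matrix.diagonal lam * Uᴴ := by
    refine ⟨(hBherm.eigenvectorUnitary : Matrix (Fin m) (Fin m) ℝ), hBherm.eigenvalues, ?_, ?_, ?_⟩
    · simpa [Matrix.star_eq_conjTranspose] using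
        Unitary.coe_star_mul_self hBherm.eigenvectorUnitary
    · simpa [Matrix.star_eq_conjTranspose, RCLike.ofReal_real_eq_id, Function.id_comp, Unitary.conjStarAlgAut_star_apply] using
        hBherm.conjStarAlgAut_star_eigenvectorUnitary
    · simpa [Matrix.star_eq_conjTranspose, RCLike.ofReal_real_eq_id, Function.id_comp, Unitary.conjStarAlgAut_apply] using
        hBherm.spectral_theorem
  have hUdet : IsUnit U.det := by
    have : Uᴴ.det * U.det = 1 := by rw [← Matrix.det_mul, hUU, Matrix.det_one]
    exact IsUnit.of_mul_eq_one _ (by rw [mul_comm] at this; exact this)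
  set C : Matrix (Fin m) (Fin m) ℝ := R * U with hCdef
  have hCdet : IsUnit C.det := by rw [hCdef, Matrix.det_mul]; exact hRdet.mul hUdet
  have hCH : IsUnit (Cᴴ).det := by
    rw [Matrix.det_conjTranspose]
    simpa using hCdet
  have hCherm' : Cᴴ = Uᴴ * R := by rw [hCdef, Matrix.conjTranspose_mul, hRherm.eq]
  clear_value B C
  -- the key simultaneous diagonalization
  have key : ∀ t : ℝ, Cᴴ * (M₀ + t • D) * C = Matrix.diagonal (fun k => 1 + t * lam k) := by
    intro t
    have expand : Cᴴ * (M₀ + t • D) * C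
        = Uᴴ * (R * M₀ * R) * U + t • (Uᴴ * (R * D * R) * U) := by
      rw [hCherm', hCdef]
      rw [Matrix.mul_add, Matrix.add_mul]
      congr 1
      · simp only [Matrix.mul_assoc]
      · rw [Matrix.mul_smul, Matrix.smul_mul]
        congr 1
        simp only [Matrix.mul_assoc]
    rw [expand, hRM₀R, ← hBdef, hUB, mul_one, hUU]
    ext i j
    rcases eq_or_ne i j with rfl | hij
    · simp [Matrix.diagonal_apply_eq]
    · simp [Matrix.diagonal_apply_ne _ hij, Matrix.one_apply_ne hij]
  set d : ℝ → Fin m → ℝ := fun t k => 1 + t * lam k with hddef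
  set w : Fin m → ℝ := fun k => (Cᴴ * W * C) k k with hwdef
  have hwpos : ∀ k, 0 < w k := fun k => posDef_diag_entry (posDef_conj hW hCdet) k
  -- main formula at a parameter t
  have main : ∀ t : ℝ, (M₀ + t • D).PosDef → ((2:ℝ) • W - (M₀ + t • D)).PosDef →
      (∀ k, 0 < d t k) ∧ (∀ k, d t k < 2 * w k) ∧
      ((M₀ + t • D)⁻¹ * W).trace + Real.log |(M₀ + t • D).det|
        = (∑ k, (w k * (d t k)⁻¹ + Real.log (d t k))) - Real.log (C.det ^ 2) := by
    intro t ht ht'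
    have hdiagPD : (Matrix.diagonal (d t)).PosDef := by
      have h' := posDef_conj ht hCdet
      rwa [key t] at h'
    have hdpos : ∀ k, 0 < d t k := Matrix.posDef_diagonal_iff.mp hdiagPD
    have hupper : ∀ k, d t k < 2 * w k := by
      intro k
      have hPD2 : (Cᴴ * ((2:ℝ) • W - (M₀ + t • D)) * C).PosDef := posDef_conj ht' hCdet
      have hentry : (Cᴴ * ((2:ℝ) • W - (M₀ + t • D)) * C) k k = 2 * w k - d t k := by
        have hsm : Cᴴ * ((2:ℝ) • W) * C = (2:ℝ) • (Cᴴ * W * C) := by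
          rw [Matrix.mul_smul, Matrix.smul_mul]
        rw [Matrix.mul_sub, Matrix.sub_mul, hsm, key t]
        simp [hwdef, hddef, Matrix.sub_apply, Matrix.smul_apply, smul_eq_mul,
          Matrix.diagonal_apply_eq]
      have := posDef_diag_entry hPD2 k
      rw [hentry] at this
      linarith
    have hAeq : M₀ + t • D = (Cᴴ)⁻¹ * Matrix.diagonal (d t) * C⁻¹ := by
      have hc : (Cᴴ)⁻¹ * (Cᴴ * (M₀ + t • D) * C) * C⁻¹ = M₀ + t • D := by
        calc (Cᴴ)⁻¹ * (Cᴴ * (M₀ + t • D) * C) * C⁻¹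
            = ((Cᴴ)⁻¹ * Cᴴ) * ((M₀ + t • D) * (C * C⁻¹)) := by simp only [Matrix.mul_assoc]
          _ = M₀ + t • D := by
              rw [Matrix.nonsing_inv_mul _ hCH, Matrix.mul_nonsing_inv _ hCdet, one_mul,
                mul_one]
      rw [← hc, key t]
    have hdiaginv : (Matrix.diagonal (d t))⁻¹ = Matrix.diagonal (fun k => (d t k)⁻¹) := by
      apply Matrix.inv_eq_right_inv
      rw [Matrix.diagonal_mul_diagonal]
      have : (fun k => d t k * (d t k)⁻¹) = fun _ => (1:ℝ) := by
        funext k; exact mul_inv_cancel₀ (ne_of_gt (hdpos k))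
      rw [this, Matrix.diagonal_one]
    have hIeq : (M₀ + t • D)⁻¹ = C * Matrix.diagonal (fun k => (d t k)⁻¹) * Cᴴ := by
      rw [hAeq, Matrix.mul_inv_rev, Matrix.mul_inv_rev,
        Matrix.nonsing_inv_nonsing_inv _ hCdet, Matrix.nonsing_inv_nonsing_inv _ hCH,
        hdiaginv]
      simp only [Matrix.mul_assoc]
    have htrace : ((M₀ + t • D)⁻¹ * W).trace = ∑ k, w k * (d t k)⁻¹ := by
      rw [hIeq]
      have e1 : C * Matrix.diagonal (fun k => (d t k)⁻¹) * Cᴴ * W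
          = (C * Matrix.diagonal (fun k => (d t k)⁻¹)) * (Cᴴ * W) := by
        simp only [Matrix.mul_assoc]
      rw [e1, Matrix.trace_mul_comm]
      have e2 : Cᴴ * W * (C * Matrix.diagonal (fun k => (d t k)⁻¹))
          = (Cᴴ * W * C) * Matrix.diagonal (fun k => (d t k)⁻¹) := by
        simp only [Matrix.mul_assoc]
      rw [e2, Matrix.trace_mul_comm, trace_diagonal_mul]
      exact Finset.sum_congr rfl fun k _ => by rw [mul_comm, hwdef]
    have hdetformula : Real.log |(M₀ + t • D).det|
        = (∑ k, Real.log (d t k)) - Real.log (C.det ^ 2) := by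
      have hdc : C.det ≠ 0 := hCdet.ne_zero
      have hdc2 : (0:ℝ) < C.det ^ 2 := by positivity
      have hdetc : (M₀ + t • D).det * C.det ^ 2 = ∏ k, d t k := by
        have h := congrArg Matrix.det (key t)
        rw [Matrix.det_mul, Matrix.det_mul, Matrix.det_conjTranspose,
          Matrix.det_diagonal] at h
        simp only [star_trivial] at h
        linear_combination h
      have hprod : (0:ℝ) < ∏ k, d t k := Finset.prod_pos fun k _ => hdpos k
      have hdetM : (M₀ + t • D).det = (∏ k, d t k) / C.det ^ 2 :=
        eq_div_of_mul_eq (ne_of_gt hdc2) hdetc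
      rw [hdetM, abs_of_pos (div_pos hprod hdc2),
        Real.log_div (ne_of_gt hprod) (ne_of_gt hdc2),
        Real.log_prod fun k _ => ne_of_gt (hdpos k)]
    refine ⟨hdpos, hupper, ?_⟩
    rw [htrace, hdetformula, Finset.sum_add_distrib]
    ring
  -- positive definiteness along the segment
  have hMb : (M₀ + b • D).PosDef := by
    have hcomb : a • M₀ + b • (M₀ + D) = M₀ + b • D := by
      rw [smul_add, ← add_assoc, ← add_smul, hab, one_smul]
    have h' := (posDef_smul h0 ha).add (posDef_smul h1 hb)
    rwa [hcomb] at h'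
  have hMb' : ((2:ℝ) • W - (M₀ + b • D)).PosDef := by
    have hcomb : a • ((2:ℝ) • W - M₀) + b • ((2:ℝ) • W - (M₀ + D))
        = (2:ℝ) • W - (M₀ + b • D) := by
      have e1 : a • ((2:ℝ) • W) + b • ((2:ℝ) • W) = (2:ℝ) • W := by
        rw [← add_smul, hab, one_smul]
      have e2 : a • M₀ + b • (M₀ + D) = M₀ + b • D := by
        rw [smul_add, ← add_assoc, ← add_smul, hab, one_smul]
      calc a • ((2:ℝ) • W - M₀) + b • ((2:ℝ) • W - (M₀ + D))
          = (a • ((2:ℝ) • W) + b • ((2:ℝ) • W)) - (a • M₀ + b • (M₀ + D)) := by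
            rw [smul_sub, smul_sub]; abel
        _ = (2:ℝ) • W - (M₀ + b • D) := by rw [e1, e2]
    have h' := (posDef_smul h0' ha).add (posDef_smul h1' hb)
    rwa [hcomb] at h'
  obtain ⟨hd0pos, hd0lt, hf0⟩ := main 0 (by simpa using h0) (by simpa using h0')
  obtain ⟨hd1pos, hd1lt, hf1⟩ := main 1 (by simpa using h1) (by simpa using h1')
  obtain ⟨hdbpos, hdblt, hfb⟩ := main b hMb hMb'
  -- rewrite the three values
  rw [show M₀ + (0:ℝ) • D = M₀ by simp] at hf0
  rw [show M₀ + (1:ℝ) • D = M₀ + D by simp] at hf1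
  -- some eigenvalue is nonzero
  have hlamne : ∃ k, lam k ≠ 0 := by
    by_contra h
    push_neg at h
    have hlam0 : lam = 0 := funext h
    have hB0 : B = 0 := by
      have hdz : Matrix.diagonal (lam) = 0 := by
        rw [hlam0]; exact Matrix.diagonal_zero
      rw [hBspec, hdz]
      simp
    apply hD0
    have hD' : R⁻¹ * (R * D * R) * R⁻¹ = D := by
      calc R⁻¹ * (R * D * R) * R⁻¹ = (R⁻¹ * R) * (D * (R * R⁻¹)) := by
            simp only [Matrix.mul_assoc]
        _ = D := by
            rw [Matrix.nonsing_inv_mul _ hRdet, Matrix.mul_nonsing_inv _ hRdet, one_mul,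
              mul_one]
    rw [← hD', ← hBdef, hB0]
    simp
  -- the scalar inequality, summed
  have hsum : (∑ k, (w k * (d b k)⁻¹ + Real.log (d b k)))
      < a * (∑ k, (w k * (d 0 k)⁻¹ + Real.log (d 0 k)))
        + b * (∑ k, (w k * (d 1 k)⁻¹ + Real.log (d 1 k))) := by
    rw [Finset.mul_sum, Finset.mul_sum, ← Finset.sum_add_distrib]
    obtain ⟨k₀, hk₀⟩ := hlamne
    have hkey : ∀ k : Fin m,
        (fun u => w k * u⁻¹ + Real.log u) (d b k)
          ≤ a * ((fun u => w k * u⁻¹ + Real.log u) (d 0 k))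
            + b * ((fun u => w k * u⁻¹ + Real.log u) (d 1 k))
        ∧ (lam k ≠ 0 →
        (fun u => w k * u⁻¹ + Real.log u) (d b k)
          < a * ((fun u => w k * u⁻¹ + Real.log u) (d 0 k))
            + b * ((fun u => w k * u⁻¹ + Real.log u) (d 1 k))) := by
      intro k
      have hmem0 : d 0 k ∈ Set.Ioo (0:ℝ) (2 * w k) := ⟨hd0pos k, hd0lt k⟩
      have hmem1 : d 1 k ∈ Set.Ioo (0:ℝ) (2 * w k) := ⟨hd1pos k, hd1lt k⟩
      have hcvx := psi_strictConvexOn (w k) (hwpos k)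
      have hdb : d b k = a * d 0 k + b * d 1 k := by
        have ha' : a = 1 - b := by linarith
        simp only [hddef]
        rw [ha']; ring
      constructor
      · by_cases hlk : lam k = 0
        · have h01 : d 0 k = d 1 k := by simp [hddef, hlk]
          have hb1 : d b k = d 0 k := by simp [hddef, hlk]
          rw [hb1, h01]
          have : a * (w k * (d 1 k)⁻¹ + Real.log (d 1 k))
              + b * (w k * (d 1 k)⁻¹ + Real.log (d 1 k))
              = (w k * (d 1 k)⁻¹ + Real.log (d 1 k)) := by
            have ha' : a = 1 - b := by linarith
            rw [ha']; ring
          rw [this]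
        · have hne : d 0 k ≠ d 1 k := by
            simp only [hddef]
            intro h
            apply hlk
            linarith [h]
          have := hcvx.2 hmem0 hmem1 hne ha hb hab
          simp only [smul_eq_mul] at this
          rw [hdb]
          exact le_of_lt this
      · intro hlk
        have hne : d 0 k ≠ d 1 k := by
          simp only [hddef]
          intro h
          apply hlk
          linarith [h]
        have := hcvx.2 hmem0 hmem1 hne ha hb hab
        simp only [smul_eq_mul] at this
        rw [hdb]
        exact this
    exact Finset.sum_lt_sum (fun k _ => (hkey k).1) ⟨k₀, Finset.mem_univ k₀, (hkey k₀).2 hk₀⟩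
  rw [hf0, hf1, hfb]
  have hfinal : a * ((∑ k, (w k * (d 0 k)⁻¹ + Real.log (d 0 k))) - Real.log (C.det ^ 2))
      + b * ((∑ k, (w k * (d 1 k)⁻¹ + Real.log (d 1 k))) - Real.log (C.det ^ 2))
      = (a * (∑ k, (w k * (d 0 k)⁻¹ + Real.log (d 0 k)))
        + b * (∑ k, (w k * (d 1 k)⁻¹ + Real.log (d 1 k)))) - Real.log (C.det ^ 2) := by
    linear_combination (-(Real.log (C.det ^ 2))) * hab
  rw [hfinal]
  exact sub_lt_sub_right hsum _

lemma posDef_combo {m : ℕ} {X Y : Matrix (Fin m) (Fin m) ℝ} (hX : X.PosDef) (hY : Y.PosDef)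
    {a b : ℝ} (ha : 0 ≤ a) (hb : 0 ≤ b) (hab : a + b = 1) : (a • X + b • Y).PosDef := by
  by_cases ha0 : a = 0
  · have hb1 : b = 1 := by linarith
    simpa [ha0, hb1] using hY
  by_cases hb0 : b = 0
  · have ha1 : a = 1 := by linarith
    simpa [ha1, hb0] using hX
  exact (posDef_smul hX (lt_of_le_of_ne ha (Ne.symm ha0))).add
    (posDef_smul hY (lt_of_le_of_ne hb (Ne.symm hb0)))

lemma combo_sub {m : ℕ} (Z X Y : Matrix (Fin m) (Fin m) ℝ) {a b : ℝ} (hab : a + b = 1) :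
    a • (Z - X) + b • (Z - Y) = Z - (a • X + b • Y) := by
  have hz : a • Z + b • Z = Z := by rw [← add_smul, hab, one_smul]
  calc a • (Z - X) + b • (Z - Y) = (a • Z + b • Z) - (a • X + b • Y) := by
        rw [smul_sub, smul_sub]; abel
    _ = Z - (a • X + b • Y) := by rw [hz]

/-- If `rank S̄̄ = n`, `Σ` is symmetric and `W` is symmetric,
then on `Ω = {p : M_p ≻ 0 and 2W − M_p ≻ 0}` the objective
`Φ₀(p) = trace(M_p⁻¹ W) + log|det M_p|` is strictly convex (and `Ω` is a
convex set); in particular `Φ₀` has at most one minimizer in `Ω`. -/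
theorem stmt5 {m n : ℕ} (S : Matrix (Fin m) (Fin n) ℝ)
    (Sig W : Matrix (Fin m) (Fin m) ℝ)
    (hrank : (pairProdMatrix S).rank = n)
    (hSig : Sig.IsSymm) (hW : W.IsSymm) :
    Convex ℝ {p : Fin n → ℝ |
        (covMat S Sig p).PosDef ∧ ((2 : ℝ) • W - covMat S Sig p).PosDef} ∧
      StrictConvexOn ℝ
        {p : Fin n → ℝ |
          (covMat S Sig p).PosDef ∧ ((2 : ℝ) • W - covMat S Sig p).PosDef}
        (fun p => ((covMat S Sig p)⁻¹ * W).trace +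
          Real.log |(covMat S Sig p).det|) ∧
      ∀ p q : Fin n → ℝ,
        p ∈ {p : Fin n → ℝ |
          (covMat S Sig p).PosDef ∧ ((2 : ℝ) • W - covMat S Sig p).PosDef} →
        q ∈ {p : Fin n → ℝ |
          (covMat S Sig p).PosDef ∧ ((2 : ℝ) • W - covMat S Sig p).PosDef} →
        IsMinOn (fun p => ((covMat S Sig p)⁻¹ * W).trace +
            Real.log |(covMat S Sig p).det|)
          {p : Fin n → ℝ |
            (covMat S Sig p).PosDef ∧ ((2 : ℝ) • W - covMat S Sig p).PosDef} p →
        IsMinOn (fun p => ((covMat S Sig p)⁻¹ * W).trace +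
            Real.log |(covMat S Sig p).det|)
          {p : Fin n → ℝ |
            (covMat S Sig p).PosDef ∧ ((2 : ℝ) • W - covMat S Sig p).PosDef} q →
        p = q := by

  set Ω : Set (Fin n → ℝ) := {p : Fin n → ℝ |
    (covMat S Sig p).PosDef ∧ ((2 : ℝ) • W - covMat S Sig p).PosDef} with hΩdef
  set f : (Fin n → ℝ) → ℝ := fun p => ((covMat S Sig p)⁻¹ * W).trace +
    Real.log |(covMat S Sig p).det| with hfdef
  -- affine combination formula
  have hcomb : ∀ (x y : Fin n → ℝ) (a b : ℝ), a + b = 1 →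
      covMat S Sig (a • x + b • y) = a • covMat S Sig x + b • covMat S Sig y := by
    intro x y a b hab
    have hxy : a • x + b • y = x + b • (y - x) := by
      funext i
      have ha' : a = 1 - b := by linarith
      simp [ha']
      ring
    have hy' : y = x + (1:ℝ) • (y - x) := by funext i; simp
    have h2 : covMat S Sig y
        = covMat S Sig x + S * Matrix.diagonal (y - x) * Sᵀ := by
      conv_lhs => rw [hy']
      rw [covMat_affine, one_smul]
    rw [hxy, covMat_affine, h2, smul_add, ← add_assoc, ← add_smul, hab, one_smul]
  have hconv : Convex ℝ Ω := by
    intro x hx y hy a b ha hb hab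
    constructor
    · rw [hcomb x y a b hab]
      exact posDef_combo hx.1 hy.1 ha hb hab
    · rw [hcomb x y a b hab, ← combo_sub ((2:ℝ) • W) _ _ hab]
      exact posDef_combo hx.2 hy.2 ha hb hab
  have hstrict : StrictConvexOn ℝ Ω f := by
    refine ⟨hconv, ?_⟩
    intro x hx y hy hxy a b ha hb hab
    set M₀ : Matrix (Fin m) (Fin m) ℝ := covMat S Sig x with hM₀def
    set D : Matrix (Fin m) (Fin m) ℝ := S * Matrix.diagonal (y - x) * Sᵀ with hDdef
    have hxy' : a • x + b • y = x + b • (y - x) := by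
      funext i
      have ha' : a = 1 - b := by linarith
      simp [ha']
      ring
    have h1 : covMat S Sig (a • x + b • y) = M₀ + b • D := by
      rw [hxy', covMat_affine]
    have hy' : y = x + (1:ℝ) • (y - x) := by funext i; simp
    have h2 : covMat S Sig y = M₀ + D := by
      conv_lhs => rw [hy']
      rw [covMat_affine, one_smul]
    have hDh : Dᵀ = D := by
      rw [hDdef]
      rw [Matrix.transpose_mul, Matrix.transpose_mul, Matrix.transpose_transpose,
        Matrix.diagonal_transpose, Matrix.mul_assoc]
    have hD0 : D ≠ 0 :=
      diag_ne_zero_of_rank hrank (sub_ne_zero.mpr fun h => hxy h.symm)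
    have hy1 : (M₀ + D).PosDef := by rw [← h2]; exact hy.1
    have hy2 : ((2:ℝ) • W - (M₀ + D)).PosDef := by rw [← h2]; exact hy.2
    have hgoal := core W M₀ D hx.1 hx.2 hy1 hy2 hDh hD0 ha hb hab
    simp only [hfdef, smul_eq_mul]
    rw [h1, h2]
    exact hgoal
  refine ⟨hconv, hstrict, ?_⟩
  intro p q hp hq hminp hminq
  by_contra hne
  have hhalf : (0:ℝ) < 1/2 := by norm_num
  have hz : (1/2 : ℝ) • p + (1/2 : ℝ) • q ∈ Ω :=
    hconv hp hq (by norm_num) (by norm_num) (by norm_num)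
  have hlt := hstrict.2 hp hq hne hhalf hhalf (by norm_num)
  have h1 : f p ≤ f ((1/2 : ℝ) • p + (1/2 : ℝ) • q) := isMinOn_iff.mp hminp _ hz
  have hpq : f p ≤ f q := isMinOn_iff.mp hminp q hq
  have hqp : f q ≤ f p := isMinOn_iff.mp hminq p hp
  have heq : f p = f q := le_antisymm hpq hqp
  simp only [smul_eq_mul] at hlt
  rw [← heq] at hlt
  linarith
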